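/- On the word algebra CA^n, the identity Σ_{a=1}^{n} sh_a ∘ ν_{k−1} ∘ ∂_a = k · ν_k holds, where ν_{k−1} here acts on words of length n−1. -/

import Mathlib

/-- Insertion operator: `shOp A a` sends a word `w` (basis element of the free
`ℂ`-vector space on words) to the sum of the words obtained by inserting the
letter `a` at each of the `w.length + 1` possible positions. -/
noncomputable def shOp (A : Type) [DecidableEq A] (a : A) :
    (List A →₀ ℂ) →ₗ[ℂ] (List A →₀ ℂ) :=
  Finsupp.lift (List A →₀ ℂ) ℂ (List A)
    (fun w => ∑ i : Fin (w.length + 1), Finsupp.single (List.insertIdx w i a) 1)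

/-- Deletion operator: `delOp A a` sends a word `w` to the sum, over all positions
`i` with `w_i = a`, of the word obtained by deleting position `i`. -/
noncomputable def delOp (A : Type) [DecidableEq A] (a : A) :
    (List A →₀ ℂ) →ₗ[ℂ] (List A →₀ ℂ) :=
  Finsupp.lift (List A →₀ ℂ) ℂ (List A)
    (fun w => ∑ i : Fin w.length,
      if w.get i = a then Finsupp.single (w.eraseIdx i) 1 else 0)

variable {A : Type} [DecidableEq A]
noncomputable def consOp (A : Type) [DecidableEq A] (c : A) :
    (List A →₀ ℂ) →ₗ[ℂ] (List A →₀ ℂ) :=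
  Finsupp.lmapDomain ℂ ℂ (List.cons c)
lemma consOp_single (c : A) (w : List A) (r : ℂ) :
    consOp A c (Finsupp.single w r) = Finsupp.single (c :: w) r := by
  simp [consOp, Finsupp.mapDomain_single]
lemma shOp_single (a : A) (w : List A) :
    shOp A a (Finsupp.single w 1)
      = ∑ i : Fin (w.length + 1), Finsupp.single (List.insertIdx w i a) 1 := by
  simp [shOp]
lemma delOp_single (a : A) (w : List A) :
    delOp A a (Finsupp.single w 1)
      = ∑ i : Fin w.length,
          if w.get i = a then Finsupp.single (w.eraseIdx i) 1 else 0 := by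
  simp [delOp]

lemma shOp_cons (a c : A) (w : List A) :
    shOp A a (Finsupp.single (c :: w) 1)
      = Finsupp.single (a :: c :: w) 1 + consOp A c (shOp A a (Finsupp.single w 1)) := by
  rw [shOp_single, shOp_single, map_sum]
  show (∑ i : Fin (w.length + 1 + 1), Finsupp.single (List.insertIdx (c :: w) i a) 1) = _
  rw [Fin.sum_univ_succ]
  simp only [Fin.val_zero, Fin.val_succ, List.insertIdx_zero, List.insertIdx_succ_cons]
  simp [consOp_single]

lemma delOp_cons (a c : A) (w : List A) :
    delOp A a (Finsupp.single (c :: w) 1)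
      = (if c = a then Finsupp.single w 1 else 0)
        + consOp A c (delOp A a (Finsupp.single w 1)) := by
  rw [delOp_single, delOp_single, map_sum]
  show (∑ i : Fin (w.length + 1),
      if (c :: w).get i = a then Finsupp.single ((c :: w).eraseIdx i) 1 else 0) = _
  rw [Fin.sum_univ_succ]
  congr 1
  refine Finset.sum_congr rfl fun i _ => ?_
  simp only [List.get_eq_getElem] at *
  by_cases h : w[(i:ℕ)] = a <;> simp [h, consOp_single]

lemma op_ext {f g : (List A →₀ ℂ) →ₗ[ℂ] (List A →₀ ℂ)}
    (h : ∀ w, f (Finsupp.single w 1) = g (Finsupp.single w 1)) : f = g := by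
  refine Finsupp.lhom_ext fun w r => ?_
  have hw : (Finsupp.single w r) = r • Finsupp.single w (1:ℂ) := by
    simp [Finsupp.smul_single]
  rw [hw, map_smul, map_smul, h]

lemma shOp_consOp_apply (a c : A) (x : List A →₀ ℂ) :
    shOp A a (consOp A c x)
      = consOp A a (consOp A c x) + consOp A c (shOp A a x) := by
  have : (shOp A a).comp (consOp A c)
      = (consOp A a).comp (consOp A c) + (consOp A c).comp (shOp A a) := by
    refine op_ext fun w => ?_
    simp only [LinearMap.comp_apply, LinearMap.add_apply, consOp_single]
    rw [shOp_cons]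
  exact LinearMap.congr_fun this x

lemma delOp_consOp_apply (a c : A) (x : List A →₀ ℂ) :
    delOp A a (consOp A c x)
      = (if c = a then x else 0) + consOp A c (delOp A a x) := by
  have : (delOp A a).comp (consOp A c)
      = (if c = a then LinearMap.id else 0) + (consOp A c).comp (delOp A a) := by
    refine op_ext fun w => ?_
    simp only [LinearMap.comp_apply, LinearMap.add_apply, consOp_single]
    rw [delOp_cons]
    by_cases h : c = a <;> simp [h]
  have := LinearMap.congr_fun this x
  simp only [LinearMap.comp_apply, LinearMap.add_apply] at this
  rw [this]
  by_cases h : c = a <;> simp [h]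

lemma shOp_comm_single (a b : A) (w : List A) :
    shOp A a (shOp A b (Finsupp.single w 1)) = shOp A b (shOp A a (Finsupp.single w 1)) := by
  have h0 : ∀ x : A, shOp A x (Finsupp.single ([]:List A) 1) = Finsupp.single [x] 1 := by
    intro x; rw [shOp_single]; simp
  induction w with
  | nil =>
      rw [h0, h0, shOp_cons, shOp_cons, h0, h0, consOp_single, consOp_single]
      abel
  | cons c w ih =>
      simp only [shOp_cons, map_add, shOp_consOp_apply, consOp_single, ih]
      abel

lemma delOp_comm_single (a b : A) (w : List A) :
    delOp A a (delOp A b (Finsupp.single w 1)) = delOp A b (delOp A a (Finsupp.single w 1)) := by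
  have h0 : ∀ x : A, delOp A x (Finsupp.single ([]:List A) 1) = 0 := by
    intro x; rw [delOp_single]; simp
  induction w with
  | nil => rw [h0, h0, map_zero, map_zero]
  | cons c w ih =>
      simp only [delOp_cons, map_add, delOp_consOp_apply, ih]
      split_ifs <;> (try simp only [map_zero, add_zero, zero_add]) <;> abel

lemma shOp_comm (a b : A) : (shOp A a).comp (shOp A b) = (shOp A b).comp (shOp A a) :=
  op_ext fun w => shOp_comm_single a b w

lemma delOp_comm (a b : A) : (delOp A a).comp (delOp A b) = (delOp A b).comp (delOp A a) :=
  op_ext fun w => delOp_comm_single a b w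


/-- Replacement operator: `thetaOp A b a` sends a word `w` to the sum, over all
positions `i` with `w_i = b`, of the word obtained by replacing the letter at
position `i` by `a`. -/
noncomputable def thetaOp (A : Type) [DecidableEq A] (b a : A) :
    (List A →₀ ℂ) →ₗ[ℂ] (List A →₀ ℂ) :=
  Finsupp.lift (List A →₀ ℂ) ℂ (List A)
    (fun w => ∑ i : Fin w.length,
      if w.get i = b then Finsupp.single (w.set i a) 1 else 0)


/-- Composition `sh_{a₁} ∘ sh_{a₂} ∘ ⋯ ∘ sh_{a_k}` of insertion operators along a list. -/
noncomputable def shChain (A : Type) [DecidableEq A] (l : List A) :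
    (List A →₀ ℂ) →ₗ[ℂ] (List A →₀ ℂ) :=
  l.foldr (fun c f => (shOp A c).comp f) LinearMap.id

/-- Composition `∂_{a₁} ∘ ∂_{a₂} ∘ ⋯ ∘ ∂_{a_k}` of deletion operators along a list. -/
noncomputable def delChain (A : Type) [DecidableEq A] (l : List A) :
    (List A →₀ ℂ) →ₗ[ℂ] (List A →₀ ℂ) :=
  l.foldr (fun c f => (delOp A c).comp f) LinearMap.id

lemma shChain_cons (c : A) (l : List A) :
    shChain A (c :: l) = (shOp A c).comp (shChain A l) := rfl

lemma delChain_cons (c : A) (l : List A) :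
    delChain A (c :: l) = (delOp A c).comp (delChain A l) := rfl

lemma shChain_perm {l₁ l₂ : List A} (h : l₁.Perm l₂) : shChain A l₁ = shChain A l₂ := by
  induction h with
  | nil => rfl
  | cons x _ ih => rw [shChain_cons, shChain_cons, ih]
  | swap x y l =>
      rw [shChain_cons, shChain_cons, shChain_cons, shChain_cons,
        ← LinearMap.comp_assoc, ← LinearMap.comp_assoc, shOp_comm]
  | trans _ _ ih1 ih2 => rw [ih1, ih2]

lemma delChain_perm {l₁ l₂ : List A} (h : l₁.Perm l₂) : delChain A l₁ = delChain A l₂ := by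
  induction h with
  | nil => rfl
  | cons x _ ih => rw [delChain_cons, delChain_cons, ih]
  | swap x y l =>
      rw [delChain_cons, delChain_cons, delChain_cons, delChain_cons,
        ← LinearMap.comp_assoc, ← LinearMap.comp_assoc, delOp_comm]
  | trans _ _ ih1 ih2 => rw [ih1, ih2]

lemma delChain_append (l₁ l₂ : List A) :
    delChain A (l₁ ++ l₂) = (delChain A l₁).comp (delChain A l₂) := by
  induction l₁ with
  | nil => simp [delChain]
  | cons c l ih =>
      rw [List.cons_append, delChain_cons, delChain_cons, ih, LinearMap.comp_assoc]

open scoped Classical in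
/-- The symmetrized shuffling operator
`ν_k = Σ_{1 ≤ a₁ ≤ ⋯ ≤ a_k ≤ n} (1/∏_j #{l : a_l = j}!) · sh_{a₁}∘⋯∘sh_{a_k}∘∂_{a₁}∘⋯∘∂_{a_k}`
on the word algebra over the alphabet `{1,…,n}` (here `Fin n`). -/
noncomputable def nuOp (n k : ℕ) :
    (List (Fin n) →₀ ℂ) →ₗ[ℂ] (List (Fin n) →₀ ℂ) :=
  ∑ a ∈ Finset.univ.filter (fun a : Fin k → Fin n => Monotone a),
    (((∏ j : Fin n,
        Nat.factorial ((Finset.univ.filter (fun l : Fin k => a l = j)).card) : ℕ) : ℂ))⁻¹ •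
      ((shChain (Fin n) (List.ofFn a)).comp (delChain (Fin n) (List.ofFn a)))


section Comb

variable {n : ℕ}

/-- The monotone tuple associated to a multiset of given cardinality. -/
noncomputable def mkTuple (m : ℕ) (s : Multiset (Fin n)) (h : Multiset.card s = m) :
    Fin m → Fin n :=
  fun i => (s.sort (· ≤ ·)).get (Fin.cast (by rw [Multiset.length_sort, h]) i)

lemma mkTuple_monotone (m : ℕ) (s : Multiset (Fin n)) (h : Multiset.card s = m) :
    Monotone (mkTuple m s h) := by
  intro i j hij
  exact (Multiset.pairwise_sort s (· ≤ ·)).rel_get_of_le (by simpa using hij)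

lemma ofFn_mkTuple (m : ℕ) (s : Multiset (Fin n)) (h : Multiset.card s = m) :
    List.ofFn (mkTuple m s h) = s.sort (· ≤ ·) := by
  apply List.ext_getElem
  · simp [Multiset.length_sort, h]
  · intro i h1 h2
    simp [mkTuple]

lemma coe_ofFn_mkTuple (m : ℕ) (s : Multiset (Fin n)) (h : Multiset.card s = m) :
    (List.ofFn (mkTuple m s h) : Multiset (Fin n)) = s := by
  rw [ofFn_mkTuple, Multiset.sort_eq]

lemma tuple_eq_of_coe_eq {m : ℕ} {a b : Fin m → Fin n} (ha : Monotone a) (hb : Monotone b)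
    (h : (List.ofFn a : Multiset (Fin n)) = (List.ofFn b : Multiset (Fin n))) : a = b := by
  apply List.ofFn_injective
  exact List.Perm.eq_of_sortedLE ha.sortedLE_ofFn hb.sortedLE_ofFn (Multiset.coe_eq_coe.mp h)

noncomputable def coefM (s : Multiset (Fin n)) : ℂ :=
  (((∏ j : Fin n, Nat.factorial (s.count j)) : ℕ) : ℂ)⁻¹

lemma card_filter_eq_count {k : ℕ} (a : Fin k → Fin n) (j : Fin n) :
    (Finset.univ.filter (fun l : Fin k => a l = j)).card
      = Multiset.count j (List.ofFn a : Multiset (Fin n)) := by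
  induction k with
  | zero => simp [List.ofFn_zero]
  | succ k ih =>
      rw [List.ofFn_succ, ← Multiset.cons_coe, Multiset.count_cons]
      rw [Finset.card_filter, Fin.sum_univ_succ, ← Finset.card_filter, ih]
      by_cases h : a 0 = j
      · simp [h, add_comm]
      · simp [h]; exact fun hh => h hh.symm

lemma coefM_erase (s : Multiset (Fin n)) (a : Fin n) (h : a ∈ s) :
    coefM (s.erase a) = (s.count a : ℂ) * coefM s := by
  have hpos : 0 < s.count a := Multiset.count_pos.mpr h
  have key : (∏ j : Fin n, Nat.factorial (s.count j))
      = s.count a * ∏ j : Fin n, Nat.factorial ((s.erase a).count j) := by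
    rw [← Finset.mul_prod_erase Finset.univ _ (Finset.mem_univ a),
      ← Finset.mul_prod_erase Finset.univ (fun j => Nat.factorial ((s.erase a).count j))
        (Finset.mem_univ a)]
    have h1 : ∀ j ∈ Finset.univ.erase a,
        Nat.factorial ((s.erase a).count j) = Nat.factorial (s.count j) := by
      intro j hj
      rw [Multiset.count_erase_of_ne (Finset.ne_of_mem_erase hj)]
    rw [Finset.prod_congr rfl h1, Multiset.count_erase_self, ← mul_assoc]
    congr 1
    rw [mul_comm]
    rw [mul_comm ((Multiset.count a s - 1).factorial)]
    exact (Nat.mul_factorial_pred hpos.ne').symm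
  rw [coefM, coefM, key]
  have h2 : ((s.count a : ℂ)) ≠ 0 := Nat.cast_ne_zero.mpr hpos.ne'
  push_cast
  rw [mul_inv, ← mul_assoc, mul_inv_cancel₀ h2, one_mul]

end Comb

section Main

open scoped Classical

variable {n : ℕ}

lemma coefT_eq {k : ℕ} (a : Fin k → Fin n) :
    (((∏ j : Fin n,
        Nat.factorial ((Finset.univ.filter (fun l : Fin k => a l = j)).card) : ℕ) : ℂ))⁻¹
      = coefM (List.ofFn a : Multiset (Fin n)) := by
  simp only [coefM, card_filter_eq_count]

lemma card_coe_ofFn {m : ℕ} (c : Fin m → Fin n) :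
    Multiset.card (↑(List.ofFn c) : Multiset (Fin n)) = m := by simp

/-- The sorted merge of a letter and a monotone tuple. -/
noncomputable def tup {k' : ℕ} (a : Fin n) (b : Fin k' → Fin n) : Fin (k' + 1) → Fin n :=
  mkTuple (k' + 1) (a ::ₘ ↑(List.ofFn b)) (by simp)

lemma tup_monotone {k' : ℕ} (a : Fin n) (b : Fin k' → Fin n) : Monotone (tup a b) :=
  mkTuple_monotone _ _ _

lemma coe_ofFn_tup {k' : ℕ} (a : Fin n) (b : Fin k' → Fin n) :
    (↑(List.ofFn (tup a b)) : Multiset (Fin n)) = a ::ₘ ↑(List.ofFn b) :=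
  coe_ofFn_mkTuple _ _ _

lemma fiber_sum {k' : ℕ} (c : Fin (k' + 1) → Fin n) (hc : Monotone c) (a : Fin n) :
    (∑ b ∈ Finset.univ.filter (fun b : Fin k' → Fin n => Monotone b),
        if tup a b = c then coefM (List.ofFn b : Multiset (Fin n)) else 0)
      = ((↑(List.ofFn c) : Multiset (Fin n)).count a : ℂ)
          * coefM (↑(List.ofFn c) : Multiset (Fin n)) := by
  by_cases hmem : a ∈ (↑(List.ofFn c) : Multiset (Fin n))
  · have h0 : Multiset.card ((↑(List.ofFn c) : Multiset (Fin n)).erase a) = k' := by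
      rw [Multiset.card_erase_of_mem hmem, card_coe_ofFn]
      rfl
    set b₀ : Fin k' → Fin n := mkTuple k' ((↑(List.ofFn c) : Multiset (Fin n)).erase a) h0
      with hb₀def
    have hcoe₀ : (↑(List.ofFn b₀) : Multiset (Fin n))
        = (↑(List.ofFn c) : Multiset (Fin n)).erase a := coe_ofFn_mkTuple _ _ _
    have hb₀M : b₀ ∈ Finset.univ.filter (fun b : Fin k' → Fin n => Monotone b) := by
      simp only [Finset.mem_filter, Finset.mem_univ, true_and]
      exact mkTuple_monotone _ _ _
    have hPb₀ : tup a b₀ = c := by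
      refine tuple_eq_of_coe_eq (tup_monotone a b₀) hc ?_
      rw [coe_ofFn_tup, hcoe₀, Multiset.cons_erase hmem]
    have hsum := Finset.sum_eq_single_of_mem (f := fun b : Fin k' → Fin n =>
        if tup a b = c then coefM (↑(List.ofFn b) : Multiset (Fin n)) else 0) b₀ hb₀M ?_
    · rw [hsum]
      rw [if_pos hPb₀, hcoe₀, coefM_erase _ _ hmem]
    · intro b hb hne
      rw [if_neg]
      intro hPb
      apply hne
      have hbM : Monotone b := (Finset.mem_filter.mp hb).2
      refine tuple_eq_of_coe_eq hbM (mkTuple_monotone _ _ _) ?_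
      rw [hcoe₀]
      have : a ::ₘ (↑(List.ofFn b) : Multiset (Fin n)) = (↑(List.ofFn c) : Multiset (Fin n)) := by
        rw [← coe_ofFn_tup a b, hPb]
      rw [← this, Multiset.erase_cons_head]
  · rw [Finset.sum_eq_zero, Multiset.count_eq_zero.mpr hmem]
    · simp
    · intro b _
      rw [if_neg]
      intro hPb
      apply hmem
      rw [← hPb, coe_ofFn_tup]
      exact Multiset.mem_cons_self _ _

end Main

section Main2

open scoped Classical

variable {n : ℕ}

lemma step1 {k' : ℕ} (a : Fin n) (b : Fin k' → Fin n) (x : List (Fin n) →₀ ℂ) :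
    shOp (Fin n) a (shChain (Fin n) (List.ofFn b) (delChain (Fin n) (List.ofFn b)
        (delOp (Fin n) a x)))
      = shChain (Fin n) (List.ofFn (tup a b)) (delChain (Fin n) (List.ofFn (tup a b)) x) := by
  have hperm : (List.ofFn (tup a b)).Perm (a :: List.ofFn b) := by
    rw [← Multiset.coe_eq_coe, ← Multiset.cons_coe, coe_ofFn_tup]
  have hperm2 : (List.ofFn b ++ [a]).Perm (List.ofFn (tup a b)) :=
    (List.perm_append_singleton a _).trans hperm.symm
  rw [shChain_perm hperm, delChain_perm hperm2.symm, shChain_cons, delChain_append]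
  simp only [LinearMap.comp_apply]
  congr 1

lemma main_op (n k' : ℕ) :
    (∑ a : Fin n, (shOp (Fin n) a).comp ((nuOp n k').comp (delOp (Fin n) a)))
      = ((k' + 1 : ℕ) : ℂ) • nuOp n (k' + 1) := by
  apply LinearMap.ext
  intro x
  simp only [nuOp, LinearMap.sum_apply, LinearMap.comp_apply, LinearMap.smul_apply,
    map_sum, map_smul]
  have hL : ∀ a : Fin n, ∀ b ∈ Finset.univ.filter (fun b : Fin k' → Fin n => Monotone b),
      coefM (List.ofFn b : Multiset (Fin n)) •
          shOp (Fin n) a (shChain (Fin n) (List.ofFn b) (delChain (Fin n) (List.ofFn b)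
            (delOp (Fin n) a x)))
        = coefM (List.ofFn b : Multiset (Fin n)) •
            shChain (Fin n) (List.ofFn (tup a b))
              (delChain (Fin n) (List.ofFn (tup a b)) x) := by
    intro a b _
    rw [step1]
  calc
    ∑ a : Fin n, ∑ b ∈ Finset.univ.filter (fun b : Fin k' → Fin n => Monotone b),
        (((∏ j : Fin n,
          Nat.factorial ((Finset.univ.filter (fun l : Fin k' => b l = j)).card) : ℕ) : ℂ))⁻¹ •
          shOp (Fin n) a (shChain (Fin n) (List.ofFn b) (delChain (Fin n) (List.ofFn b)
            (delOp (Fin n) a x)))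
      = ∑ p ∈ (Finset.univ ×ˢ Finset.univ.filter (fun b : Fin k' → Fin n => Monotone b)),
          coefM (List.ofFn p.2 : Multiset (Fin n)) •
            shChain (Fin n) (List.ofFn (tup p.1 p.2))
              (delChain (Fin n) (List.ofFn (tup p.1 p.2)) x) := by
        rw [Finset.sum_product]
        refine Finset.sum_congr rfl fun a _ => Finset.sum_congr rfl fun b hb => ?_
        rw [coefT_eq, hL a b hb]
    _ = ∑ c ∈ Finset.univ.filter (fun c : Fin (k' + 1) → Fin n => Monotone c),
          ∑ p ∈ (Finset.univ ×ˢ Finset.univ.filter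
              (fun b : Fin k' → Fin n => Monotone b)).filter (fun p => tup p.1 p.2 = c),
            coefM (List.ofFn p.2 : Multiset (Fin n)) •
              shChain (Fin n) (List.ofFn (tup p.1 p.2))
                (delChain (Fin n) (List.ofFn (tup p.1 p.2)) x) := by
        rw [Finset.sum_fiberwise_of_maps_to]
        intro p _
        simp only [Finset.mem_filter, Finset.mem_univ, true_and]
        exact tup_monotone _ _
    _ = ((k' + 1 : ℕ) : ℂ) • ∑ c ∈ Finset.univ.filter (fun c : Fin (k' + 1) → Fin n => Monotone c),
          (((∏ j : Fin n,
            Nat.factorial ((Finset.univ.filter (fun l : Fin (k' + 1) => c l = j)).card) : ℕ) : ℂ))⁻¹ •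
            shChain (Fin n) (List.ofFn c) (delChain (Fin n) (List.ofFn c) x) := by
        rw [Finset.smul_sum]
        refine Finset.sum_congr rfl fun c hc => ?_
        have hcm : Monotone c := (Finset.mem_filter.mp hc).2
        have heach : ∀ p ∈ (Finset.univ ×ˢ Finset.univ.filter
            (fun b : Fin k' → Fin n => Monotone b)).filter (fun p => tup p.1 p.2 = c),
            coefM (List.ofFn p.2 : Multiset (Fin n)) •
              shChain (Fin n) (List.ofFn (tup p.1 p.2))
                (delChain (Fin n) (List.ofFn (tup p.1 p.2)) x)
            = coefM (List.ofFn p.2 : Multiset (Fin n)) •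
              shChain (Fin n) (List.ofFn c) (delChain (Fin n) (List.ofFn c) x) := by
          intro p hp
          rw [(Finset.mem_filter.mp hp).2]
        rw [Finset.sum_congr rfl heach, ← Finset.sum_smul, coefT_eq, smul_smul]
        congr 1
        rw [Finset.sum_filter, Finset.sum_product]
        have : ∀ a : Fin n,
            (∑ b ∈ Finset.univ.filter (fun b : Fin k' → Fin n => Monotone b),
              if tup a b = c then coefM (List.ofFn b : Multiset (Fin n)) else 0)
            = ((↑(List.ofFn c) : Multiset (Fin n)).count a : ℂ)
                * coefM (↑(List.ofFn c) : Multiset (Fin n)) :=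
          fiber_sum c hcm
        rw [Finset.sum_congr rfl fun a _ => this a, ← Finset.sum_mul, ← Nat.cast_sum]
        congr 2
        rw [Multiset.sum_count_eq_card (fun a _ => Finset.mem_univ a), card_coe_ofFn]

end Main2

/-- On the word algebra (restricted to words of length `n`),
`Σ_{a=1}^{n} sh_a ∘ ν_{k−1} ∘ ∂_a = k · ν_k`. -/
theorem sum_sh_nu_del (n k : ℕ) (hk : 1 ≤ k) (w : List (Fin n)) (hw : w.length = n) :
    (∑ a : Fin n, (shOp (Fin n) a).comp ((nuOp n (k-1)).comp (delOp (Fin n) a)))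
        (Finsupp.single w 1)
      = (k : ℂ) • nuOp n k (Finsupp.single w 1) := by
  obtain ⟨k', rfl⟩ : ∃ k', k = k' + 1 := ⟨k - 1, (Nat.succ_pred_eq_of_pos hk).symm⟩
  have h := main_op n k'
  rw [show k' + 1 - 1 = k' from rfl, h, LinearMap.smul_apply]
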